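/- For a filtration I = {I_m} of a Noetherian ring R, define K(I)_m = {f ∈ R : ν̄_I(f) ≥ m}. Then K(I) = {K(I)_m} is a filtration of ideals in R containing I, and ν̄_I = ν̄_{K(I)}. Moreover, K(I) is the unique largest filtration J with ν̄_I = ν̄_J. -/

import Mathlib

open Filter Topology Polynomial
open scoped ENNReal

/-- A filtration `I = {I_m}` of ideals of `R`: `I_0 = R`, `I_{n+1} ⊆ I_n`,
and `I_m · I_n ⊆ I_{m+n}`. -/
structure RingFiltration (R : Type*) [CommRing R] where
  I : ℕ → Ideal R
  top_eq : I 0 = ⊤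
  antitone_succ : ∀ n, I (n + 1) ≤ I n
  mul_le : ∀ m n, I m * I n ≤ I (m + n)

namespace RingFiltration
variable {R : Type*} [CommRing R] (F : RingFiltration R)

/-- The order function `ν_I(f) = sup {m : f ∈ I_m}`, viewed in `[0,∞]`. -/
noncomputable def nu (f : R) : ℝ≥0∞ :=
  sSup ((fun m : ℕ => (m : ℝ≥0∞)) '' {m | f ∈ F.I m})

/-- The asymptotic Samuel function `ν̄_I(f) = lim_n ν_I(f^n)/n` (the limit exists and
equals the limsup used here to define it). -/
noncomputable def nubar (f : R) : ℝ≥0∞ :=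
  Filter.limsup (fun n : ℕ => F.nu (f ^ n) / (n : ℝ≥0∞)) Filter.atTop

end RingFiltration

namespace RingFiltration
variable {R : Type*} [CommRing R] (F : RingFiltration R)

lemma I_antitone : ∀ {m n : ℕ}, m ≤ n → F.I n ≤ F.I m := by
  intro m n h
  induction h with
  | refl => exact le_rfl
  | step _ ih => exact le_trans (F.antitone_succ _) ih

lemma pow_mem {f : R} {t : ℕ} (h : f ∈ F.I t) (k : ℕ) : f ^ k ∈ F.I (k * t) := by
  induction k with
  | zero => simpa [F.top_eq] using Submodule.mem_top
  | succ k ih =>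
      have he : (k + 1) * t = k * t + t := by ring
      rw [pow_succ, he]
      exact F.mul_le (k * t) t (Ideal.mul_mem_mul ih h)

lemma le_nu_of_mem {f : R} {m : ℕ} (h : f ∈ F.I m) : (m : ℝ≥0∞) ≤ F.nu f :=
  le_sSup ⟨m, h, rfl⟩

lemma nu_eq_top {f : R} (h : ∀ k, f ∈ F.I k) : F.nu f = ⊤ := by
  refine eq_top_iff.mpr ?_
  rw [show (⊤ : ℝ≥0∞) = ⨆ n : ℕ, (n : ℝ≥0∞) from ENNReal.iSup_natCast.symm]
  exact iSup_le fun n => F.le_nu_of_mem (h n)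

lemma nu_cases (f : R) :
    (∀ k, f ∈ F.I k) ∨ ∃ t : ℕ, F.nu f = t ∧ f ∈ F.I t := by
  by_cases h : ∀ k, f ∈ F.I k
  · exact Or.inl h
  · push_neg at h
    obtain ⟨m, hm⟩ := h
    classical
    have hbd : ∀ k, f ∈ F.I k → k ≤ m := by
      intro k hk
      by_contra hc
      exact hm (F.I_antitone (le_of_not_ge hc) hk)
    have hP0 : f ∈ F.I 0 := by rw [F.top_eq]; trivial
    have hspec : f ∈ F.I (Nat.findGreatest (fun k => f ∈ F.I k) m) :=
      Nat.findGreatest_spec (P := fun k => f ∈ F.I k) (Nat.zero_le m) hP0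
    refine Or.inr ⟨Nat.findGreatest (fun k => f ∈ F.I k) m, ?_, hspec⟩
    refine le_antisymm ?_ (F.le_nu_of_mem hspec)
    refine sSup_le ?_
    rintro x ⟨k, hk, rfl⟩
    exact_mod_cast Nat.cast_le.mpr
      (Nat.le_findGreatest (P := fun k => f ∈ F.I k) (hbd k hk) hk)

lemma le_nubar_of_subseq (f : R) (m : ℕ) (hm : 0 < m) (C : ℝ≥0∞)
    (h : ∀ n : ℕ, 0 < n → C ≤ F.nu (f ^ (m * n)) / ((m * n : ℕ) : ℝ≥0∞)) :
    C ≤ F.nubar f := by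
  refine Filter.le_limsup_of_frequently_le ?_ (by isBoundedDefault)
  rw [Filter.frequently_atTop]
  intro a
  refine ⟨m * (a + 1), ?_, h (a + 1) (Nat.succ_pos a)⟩
  calc a ≤ a + 1 := Nat.le_succ a
    _ ≤ m * (a + 1) := Nat.le_mul_of_pos_left _ hm

lemma le_nubar_of_pow_mem (f : R) (m t : ℕ) (hm : 0 < m) (h : f ^ m ∈ F.I t) :
    (t : ℝ≥0∞) / (m : ℝ≥0∞) ≤ F.nubar f := by
  apply F.le_nubar_of_subseq f m hm
  intro n hn
  have h1 : f ^ (m * n) ∈ F.I (n * t) := by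
    rw [pow_mul]; exact F.pow_mem h n
  have h2 : ((n * t : ℕ) : ℝ≥0∞) ≤ F.nu (f ^ (m * n)) := F.le_nu_of_mem h1
  have he : (t : ℝ≥0∞) / (m : ℝ≥0∞) = ((n * t : ℕ) : ℝ≥0∞) / ((m * n : ℕ) : ℝ≥0∞) := by
    push_cast
    rw [mul_comm (m : ℝ≥0∞) (n : ℝ≥0∞),
      ENNReal.mul_div_mul_left _ _ (by exact_mod_cast hn.ne') (ENNReal.natCast_ne_top n)]
  rw [he]
  exact ENNReal.div_le_div_right h2 _

lemma nubar_eq_top_of_pow (f : R) (m : ℕ) (hm : 0 < m) (h : ∀ k, f ^ m ∈ F.I k) :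
    F.nubar f = ⊤ := by
  refine eq_top_iff.mpr (F.le_nubar_of_subseq f m hm ⊤ ?_)
  intro n hn
  have hle : m ≤ m * n := Nat.le_mul_of_pos_right m hn
  have hall : ∀ k, f ^ (m * n) ∈ F.I k := by
    intro k
    have he : f ^ (m * n) = f ^ m * f ^ (m * n - m) := by
      rw [← pow_add]; congr 1; omega
    rw [he]
    exact Ideal.mul_mem_right _ _ (h k)
  rw [F.nu_eq_top hall, ENNReal.top_div_of_ne_top (ENNReal.natCast_ne_top _)]

lemma nu_pow_div_le_nubar (f : R) (k : ℕ) (hk : 0 < k) :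
    F.nu (f ^ k) / (k : ℝ≥0∞) ≤ F.nubar f := by
  rcases F.nu_cases (f ^ k) with hall | ⟨t, ht, htm⟩
  · rw [F.nubar_eq_top_of_pow f k hk hall]; exact le_top
  · rw [ht]; exact F.le_nubar_of_pow_mem f k t hk htm

lemma le_nubar_of_mem {f : R} {m : ℕ} (h : f ∈ F.I m) : (m : ℝ≥0∞) ≤ F.nubar f := by
  have := F.le_nubar_of_pow_mem f 1 m Nat.one_pos (by simpa using h)
  simpa using this

lemma nubar_le_iSup (f : R) :
    F.nubar f ≤ ⨆ M : ℕ, F.nu (f ^ (M + 1)) / ((M + 1 : ℕ) : ℝ≥0∞) := by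
  refine Filter.limsup_le_of_le (by isBoundedDefault) ?_
  filter_upwards [Filter.eventually_ge_atTop 1] with n hn
  have he : n = (n - 1) + 1 := by omega
  rw [he]
  exact le_iSup (fun M => F.nu (f ^ (M + 1)) / ((M + 1 : ℕ) : ℝ≥0∞)) (n - 1)

lemma nubar_pow_le (g : R) (n : ℕ) (hn : 0 < n) :
    F.nubar (g ^ n) ≤ (n : ℝ≥0∞) * F.nubar g := by
  refine Filter.limsup_le_of_le (by isBoundedDefault) ?_
  filter_upwards [Filter.eventually_ge_atTop 1] with m hm
  have h1 : (g ^ n) ^ m = g ^ (n * m) := (pow_mul g n m).symm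
  rw [h1]
  have h2 : F.nu (g ^ (n * m)) / (m : ℝ≥0∞)
      = (n : ℝ≥0∞) * (F.nu (g ^ (n * m)) / ((n * m : ℕ) : ℝ≥0∞)) := by
    rw [← mul_div_assoc, Nat.cast_mul,
      ENNReal.mul_div_mul_left _ _ (by exact_mod_cast hn.ne') (ENNReal.natCast_ne_top n)]
  rw [h2]
  exact mul_le_mul_right (F.nu_pow_div_le_nubar g (n * m) (Nat.mul_pos hn hm)) _

lemma nu_div_le_nu_pow (f : R) (m k : ℕ) (hm : 0 < m) (hk : 0 < k) :
    F.nu (f ^ m) / (m : ℝ≥0∞) ≤ F.nu (f ^ (m * k)) / ((m * k : ℕ) : ℝ≥0∞) := by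
  rcases F.nu_cases (f ^ m) with hall | ⟨t, ht, htm⟩
  · have hle : m ≤ m * k := Nat.le_mul_of_pos_right m hk
    have hall2 : ∀ j, f ^ (m * k) ∈ F.I j := by
      intro j
      have he : f ^ (m * k) = f ^ m * f ^ (m * k - m) := by
        rw [← pow_add]; congr 1; omega
      rw [he]
      exact Ideal.mul_mem_right _ _ (hall j)
    rw [F.nu_eq_top hall2, ENNReal.top_div_of_ne_top (ENNReal.natCast_ne_top _)]
    exact le_top
  · rw [ht]
    have h1 : f ^ (m * k) ∈ F.I (k * t) := by rw [pow_mul]; exact F.pow_mem htm k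
    have h2 := F.le_nu_of_mem h1
    refine le_trans ?_ (ENNReal.div_le_div_right h2 _)
    rw [show ((k * t : ℕ) : ℝ≥0∞) = (k : ℝ≥0∞) * (t : ℝ≥0∞) by push_cast; ring,
      show ((m * k : ℕ) : ℝ≥0∞) = (k : ℝ≥0∞) * (m : ℝ≥0∞) by push_cast; ring,
      ENNReal.mul_div_mul_left _ _ (by exact_mod_cast hk.ne') (ENNReal.natCast_ne_top k)]

lemma nubar_add_le (f g : R) : F.nubar f + F.nubar g ≤ F.nubar (f * g) := by
  refine le_trans (add_le_add (F.nubar_le_iSup f) (F.nubar_le_iSup g)) ?_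
  rw [ENNReal.iSup_add]
  refine iSup_le fun M => ?_
  rw [ENNReal.add_iSup]
  refine iSup_le fun K => ?_
  have hA : F.nu (f ^ (M + 1)) / ((M + 1 : ℕ) : ℝ≥0∞)
      ≤ F.nu (f ^ ((M + 1) * (K + 1))) / (((M + 1) * (K + 1) : ℕ) : ℝ≥0∞) :=
    F.nu_div_le_nu_pow f (M + 1) (K + 1) (Nat.succ_pos _) (Nat.succ_pos _)
  have hB : F.nu (g ^ (K + 1)) / ((K + 1 : ℕ) : ℝ≥0∞)
      ≤ F.nu (g ^ ((M + 1) * (K + 1))) / (((M + 1) * (K + 1) : ℕ) : ℝ≥0∞) := by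
    have := F.nu_div_le_nu_pow g (K + 1) (M + 1) (Nat.succ_pos _) (Nat.succ_pos _)
    rwa [Nat.mul_comm (K + 1) (M + 1)] at this
  refine le_trans (add_le_add hA hB) ?_
  set N := (M + 1) * (K + 1) with hNdef
  have hNpos : 0 < N := Nat.mul_pos (Nat.succ_pos _) (Nat.succ_pos _)
  rcases F.nu_cases (f ^ N) with hfall | ⟨a, ha, ham⟩
  · have hall : ∀ k, (f * g) ^ N ∈ F.I k := fun k => by
      rw [mul_pow]; exact Ideal.mul_mem_right _ _ (hfall k)
    rw [F.nubar_eq_top_of_pow (f * g) N hNpos hall]; exact le_top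
  rcases F.nu_cases (g ^ N) with hgall | ⟨b, hb, hbm⟩
  · have hall : ∀ k, (f * g) ^ N ∈ F.I k := fun k => by
      rw [mul_pow]; exact Ideal.mul_mem_left _ _ (hgall k)
    rw [F.nubar_eq_top_of_pow (f * g) N hNpos hall]; exact le_top
  · have hmem : (f * g) ^ N ∈ F.I (a + b) := by
      rw [mul_pow]
      exact F.mul_le a b (Ideal.mul_mem_mul ham hbm)
    have hkey := F.le_nubar_of_pow_mem (f * g) N (a + b) hNpos hmem
    rw [ha, hb, ← ENNReal.add_div]
    refine le_trans (le_of_eq ?_) hkey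
    norm_cast

lemma nat_div_bound (N n i : ℕ) (hN : 0 < N) (hi : i ≤ 2 * (N * n)) :
    2 * n - 1 ≤ i / N + (2 * (N * n) - i) / N := by
  rcases Nat.lt_or_ge (i / N) (2 * n) with h | h
  · have hmod : i % N < N := Nat.mod_lt _ hN
    have hdm : N * (i / N) + i % N = i := Nat.div_add_mod i N
    have key2 : (2 * n - 1 - i / N) * N ≤ 2 * (N * n) - i := by
      generalize hq : i / N = q at h hdm ⊢
      generalize hr : i % N = r at hmod hdm
      have e2 : 2 * n - 1 - q + q + 1 = 2 * n := by omega
      have e1 : (2 * n - 1 - q) * N + N * q + N = 2 * (N * n) := by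
        calc (2 * n - 1 - q) * N + N * q + N = (2 * n - 1 - q + q + 1) * N := by ring
          _ = 2 * n * N := by rw [e2]
          _ = 2 * (N * n) := by ring
      omega
    have hD := (Nat.le_div_iff_mul_le hN).mpr key2
    generalize i / N = q at h hD ⊢
    generalize (2 * (N * n) - i) / N = D at hD ⊢
    omega
  · exact le_trans (by omega : 2 * n - 1 ≤ i / N) (Nat.le_add_right _ _)

lemma add_pow_mem (f g : R) (N t n : ℕ) (hN : 0 < N)
    (hf : f ^ N ∈ F.I t) (hg : g ^ N ∈ F.I t) :
    (f + g) ^ (2 * (N * n)) ∈ F.I (t * (2 * n - 1)) := by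
  rw [add_pow]
  apply Ideal.sum_mem
  intro i hi
  rw [Finset.mem_range] at hi
  have hi' : i ≤ 2 * (N * n) := by omega
  apply Ideal.mul_mem_right
  have hfi : f ^ i ∈ F.I ((i / N) * t) := by
    have he : f ^ i = (f ^ N) ^ (i / N) * f ^ (i % N) := by
      rw [← pow_mul, ← pow_add]
      congr 1
      exact (Nat.div_add_mod i N).symm
    rw [he]
    exact Ideal.mul_mem_right _ _ (F.pow_mem hf (i / N))
  have hgi : g ^ (2 * (N * n) - i) ∈ F.I (((2 * (N * n) - i) / N) * t) := by
    have he : g ^ (2 * (N * n) - i)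
        = (g ^ N) ^ ((2 * (N * n) - i) / N) * g ^ ((2 * (N * n) - i) % N) := by
      rw [← pow_mul, ← pow_add]
      congr 1
      exact (Nat.div_add_mod _ N).symm
    rw [he]
    exact Ideal.mul_mem_right _ _ (F.pow_mem hg _)
  have hprod := F.mul_le _ _ (Ideal.mul_mem_mul hfi hgi)
  refine F.I_antitone ?_ hprod
  have hb := nat_div_bound N n i hN hi'
  calc t * (2 * n - 1) ≤ t * (i / N + (2 * (N * n) - i) / N) := Nat.mul_le_mul_left t hb
    _ = i / N * t + (2 * (N * n) - i) / N * t := by ring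

lemma sup_arith (t N : ℕ) (hN : 0 < N) :
    (t : ℝ≥0∞) / (N : ℝ≥0∞)
      ≤ ⨆ n : ℕ, ((t * (2 * (n + 1) - 1) : ℕ) : ℝ≥0∞) / ((2 * (N * (n + 1)) : ℕ) : ℝ≥0∞) := by
  set S := ⨆ n : ℕ, ((t * (2 * (n + 1) - 1) : ℕ) : ℝ≥0∞) / ((2 * (N * (n + 1)) : ℕ) : ℝ≥0∞)
    with hS
  apply ENNReal.le_of_forall_pos_le_add
  intro ε hε hS'
  obtain ⟨n, hn⟩ : ∃ n : ℕ, (t : ℝ≥0∞) / ((2 * (N * (n + 1)) : ℕ) : ℝ≥0∞) ≤ (ε : ℝ≥0∞) := by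
    have hεne : (ε : ℝ≥0∞) ≠ 0 := by exact_mod_cast hε.ne'
    obtain ⟨k, hk⟩ := ENNReal.exists_nat_gt
      (ENNReal.div_lt_top (ENNReal.natCast_ne_top t) hεne).ne
    refine ⟨k, ?_⟩
    have hkle : (k : ℕ) ≤ 2 * (N * (k + 1)) := by
      have : k + 1 ≤ N * (k + 1) := Nat.le_mul_of_pos_left _ hN
      omega
    have hd : (t : ℝ≥0∞) / (ε : ℝ≥0∞) < ((2 * (N * (k + 1)) : ℕ) : ℝ≥0∞) :=
      lt_of_lt_of_le hk (by exact_mod_cast hkle)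
    have hDne : ((2 * (N * (k + 1)) : ℕ) : ℝ≥0∞) ≠ 0 := by
      simp only [ne_eq, Nat.cast_eq_zero]
      positivity
    rw [ENNReal.div_lt_iff (Or.inl hεne) (Or.inl ENNReal.coe_ne_top)] at hd
    rw [ENNReal.div_le_iff hDne (ENNReal.natCast_ne_top _)]
    calc (t : ℝ≥0∞) ≤ ((2 * (N * (k + 1)) : ℕ) : ℝ≥0∞) * (ε : ℝ≥0∞) := hd.le
      _ = (ε : ℝ≥0∞) * ((2 * (N * (k + 1)) : ℕ) : ℝ≥0∞) := mul_comm _ _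
  have hsplit : (t : ℝ≥0∞) / (N : ℝ≥0∞)
      = ((t * (2 * (n + 1) - 1) : ℕ) : ℝ≥0∞) / ((2 * (N * (n + 1)) : ℕ) : ℝ≥0∞)
        + (t : ℝ≥0∞) / ((2 * (N * (n + 1)) : ℕ) : ℝ≥0∞) := by
    rw [← ENNReal.add_div]
    have he1 : ((t * (2 * (n + 1) - 1) : ℕ) : ℝ≥0∞) + (t : ℝ≥0∞)
        = ((t * (2 * (n + 1)) : ℕ) : ℝ≥0∞) := by
      have hnat : t * (2 * (n + 1) - 1) + t = t * (2 * (n + 1)) := by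
        have h1 : 2 * (n + 1) - 1 + 1 = 2 * (n + 1) := by omega
        calc t * (2 * (n + 1) - 1) + t = t * (2 * (n + 1) - 1 + 1) := by ring
          _ = t * (2 * (n + 1)) := by rw [h1]
      rw [← Nat.cast_add, hnat]
    rw [he1]
    rw [show ((t * (2 * (n + 1)) : ℕ) : ℝ≥0∞)
        = ((2 * (n + 1) : ℕ) : ℝ≥0∞) * (t : ℝ≥0∞) by push_cast; ring,
      show ((2 * (N * (n + 1)) : ℕ) : ℝ≥0∞)
        = ((2 * (n + 1) : ℕ) : ℝ≥0∞) * (N : ℝ≥0∞) by push_cast; ring,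
      ENNReal.mul_div_mul_left _ _ (by positivity) (ENNReal.natCast_ne_top _)]
  calc (t : ℝ≥0∞) / (N : ℝ≥0∞)
      = ((t * (2 * (n + 1) - 1) : ℕ) : ℝ≥0∞) / ((2 * (N * (n + 1)) : ℕ) : ℝ≥0∞)
        + (t : ℝ≥0∞) / ((2 * (N * (n + 1)) : ℕ) : ℝ≥0∞) := hsplit
    _ ≤ S + (ε : ℝ≥0∞) := add_le_add (le_iSup (fun n : ℕ =>
        ((t * (2 * (n + 1) - 1) : ℕ) : ℝ≥0∞) / ((2 * (N * (n + 1)) : ℕ) : ℝ≥0∞)) n) hn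

lemma t_div_le_nubar_add (f g : R) (N t : ℕ) (hN : 0 < N)
    (hf : f ^ N ∈ F.I t) (hg : g ^ N ∈ F.I t) :
    (t : ℝ≥0∞) / (N : ℝ≥0∞) ≤ F.nubar (f + g) := by
  refine le_trans (sup_arith t N hN) (iSup_le fun n => ?_)
  have hmem := F.add_pow_mem f g N t (n + 1) hN hf hg
  have hpos : 0 < 2 * (N * (n + 1)) := by positivity
  exact F.le_nubar_of_pow_mem (f + g) (2 * (N * (n + 1))) _ hpos hmem

lemma min_le_nubar_add (f g : R) (N : ℕ) (hN : 0 < N) :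
    min (F.nu (f ^ N) / (N : ℝ≥0∞)) (F.nu (g ^ N) / (N : ℝ≥0∞)) ≤ F.nubar (f + g) := by
  rcases F.nu_cases (f ^ N) with hfall | ⟨a, ha, ham⟩
  · rcases F.nu_cases (g ^ N) with hgall | ⟨b, hb, hbm⟩
    · have hall : ∀ t : ℕ, (t : ℝ≥0∞) / (N : ℝ≥0∞) ≤ F.nubar (f + g) := fun t =>
        F.t_div_le_nubar_add f g N t hN (hfall t) (hgall t)
      have htop : (⊤ : ℝ≥0∞) ≤ F.nubar (f + g) := by
        have h1 := iSup_le hall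
        rwa [← ENNReal.iSup_div, ENNReal.iSup_natCast,
          ENNReal.top_div_of_ne_top (ENNReal.natCast_ne_top N)] at h1
      exact le_trans le_top htop
    · refine le_trans (min_le_right _ _) ?_
      rw [hb]
      exact F.t_div_le_nubar_add f g N b hN (hfall b) hbm
  · rcases F.nu_cases (g ^ N) with hgall | ⟨b, hb, hbm⟩
    · refine le_trans (min_le_left _ _) ?_
      rw [ha]
      exact F.t_div_le_nubar_add f g N a hN ham (hgall a)
    · rcases le_total a b with hab | hab
      · refine le_trans (min_le_left _ _) ?_
        rw [ha]
        exact F.t_div_le_nubar_add f g N a hN ham (F.I_antitone hab hbm)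
      · refine le_trans (min_le_right _ _) ?_
        rw [hb]
        exact F.t_div_le_nubar_add f g N b hN (F.I_antitone hab ham) hbm

lemma min_nubar_le (f g : R) : min (F.nubar f) (F.nubar g) ≤ F.nubar (f + g) := by
  refine le_trans (inf_le_inf (F.nubar_le_iSup f) (F.nubar_le_iSup g)) ?_
  rw [iSup_inf_eq]
  refine iSup_le fun M => ?_
  rw [inf_iSup_eq]
  refine iSup_le fun K => ?_
  have hA : F.nu (f ^ (M + 1)) / ((M + 1 : ℕ) : ℝ≥0∞)
      ≤ F.nu (f ^ ((M + 1) * (K + 1))) / (((M + 1) * (K + 1) : ℕ) : ℝ≥0∞) :=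
    F.nu_div_le_nu_pow f (M + 1) (K + 1) (Nat.succ_pos _) (Nat.succ_pos _)
  have hB : F.nu (g ^ (K + 1)) / ((K + 1 : ℕ) : ℝ≥0∞)
      ≤ F.nu (g ^ ((M + 1) * (K + 1))) / (((M + 1) * (K + 1) : ℕ) : ℝ≥0∞) := by
    have := F.nu_div_le_nu_pow g (K + 1) (M + 1) (Nat.succ_pos _) (Nat.succ_pos _)
    rwa [Nat.mul_comm (K + 1) (M + 1)] at this
  refine le_trans (inf_le_inf hA hB) ?_
  exact F.min_le_nubar_add f g ((M + 1) * (K + 1)) (Nat.mul_pos (Nat.succ_pos _) (Nat.succ_pos _))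

lemma nubar_zero : F.nubar (0 : R) = ⊤ :=
  F.nubar_eq_top_of_pow 0 1 Nat.one_pos (fun k => by simpa using (F.I k).zero_mem)

lemma nu_le_nu_mul (x y : R) : F.nu x ≤ F.nu (y * x) := by
  apply sSup_le
  rintro v ⟨k, hk, rfl⟩
  exact le_sSup ⟨k, Ideal.mul_mem_left _ _ hk, rfl⟩

lemma nubar_le_nubar_mul (r f : R) : F.nubar f ≤ F.nubar (r * f) := by
  refine Filter.limsup_le_limsup ?_ (by isBoundedDefault) (by isBoundedDefault)
  filter_upwards with n
  rw [mul_pow]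
  exact ENNReal.div_le_div_right (F.nu_le_nu_mul _ _) _

/-- The saturation ideals `K(I)_m = {f : ν̄_I(f) ≥ m}`. -/
noncomputable def saturationIdeal (m : ℕ) : Ideal R where
  carrier := {f | (m : ℝ≥0∞) ≤ F.nubar f}
  add_mem' {a b} ha hb := le_trans (le_min ha hb) (F.min_nubar_le a b)
  zero_mem' := by
    simp only [Set.mem_setOf_eq, F.nubar_zero]
    exact le_top
  smul_mem' c x hx := by
    simp only [Set.mem_setOf_eq, smul_eq_mul]
    exact le_trans hx (F.nubar_le_nubar_mul c x)

lemma mem_saturationIdeal {m : ℕ} {f : R} :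
    f ∈ F.saturationIdeal m ↔ (m : ℝ≥0∞) ≤ F.nubar f := Iff.rfl

/-- The saturation filtration `K(I)`. -/
noncomputable def saturation : RingFiltration R where
  I := F.saturationIdeal
  top_eq := eq_top_iff.mpr fun f _ => by
    show ((0 : ℕ) : ℝ≥0∞) ≤ F.nubar f
    simp
  antitone_succ n f hf := by
    rw [mem_saturationIdeal] at hf ⊢
    exact le_trans (by exact_mod_cast Nat.cast_le.mpr (Nat.le_succ n)) hf
  mul_le m n := Ideal.mul_le.mpr fun a ha b hb => by
    rw [mem_saturationIdeal] at ha hb ⊢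
    push_cast
    exact le_trans (add_le_add ha hb) (F.nubar_add_le a b)

lemma le_saturation (m : ℕ) : F.I m ≤ (F.saturation).I m := fun f hf =>
  F.le_nubar_of_mem hf

lemma nu_saturation_le (x : R) : (F.saturation).nu x ≤ F.nubar x := by
  apply sSup_le
  rintro v ⟨k, hk, rfl⟩
  exact hk

lemma nubar_saturation (f : R) : (F.saturation).nubar f = F.nubar f := by
  apply le_antisymm
  · refine Filter.limsup_le_of_le (by isBoundedDefault) ?_
    filter_upwards [Filter.eventually_ge_atTop 1] with n hn
    have h1 : (F.saturation).nu (f ^ n) ≤ (n : ℝ≥0∞) * F.nubar f :=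
      le_trans (F.nu_saturation_le (f ^ n)) (F.nubar_pow_le f n hn)
    calc (F.saturation).nu (f ^ n) / (n : ℝ≥0∞)
        ≤ ((n : ℝ≥0∞) * F.nubar f) / (n : ℝ≥0∞) := ENNReal.div_le_div_right h1 _
      _ = F.nubar f := by
          rw [mul_comm, mul_div_assoc,
            ENNReal.div_self (by
              have : (0:ℕ) < n := hn
              exact_mod_cast this.ne' : (n : ℝ≥0∞) ≠ 0)
              (ENNReal.natCast_ne_top n), mul_one]
  · refine Filter.limsup_le_limsup ?_ (by isBoundedDefault) (by isBoundedDefault)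
    filter_upwards with n
    refine ENNReal.div_le_div_right ?_ _
    apply sSup_le
    rintro v ⟨k, hk, rfl⟩
    exact le_sSup ⟨k, F.le_nubar_of_mem hk, rfl⟩

end RingFiltration

/-- For a filtration `I` of a Noetherian ring `R`, the sets
`K(I)_m = {f : ν̄_I(f) ≥ m}` form a filtration of ideals containing `I`, with
`ν̄_{K(I)} = ν̄_I`, and `K(I)` is the unique largest filtration `J` with `ν̄_J = ν̄_I`. -/
theorem saturation_exists {R : Type*} [CommRing R] [IsNoetherianRing R]
    (F : RingFiltration R) :
    ∃ K : RingFiltration R,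
      (∀ m : ℕ, ∀ f : R, f ∈ K.I m ↔ (m : ℝ≥0∞) ≤ F.nubar f) ∧
      (∀ m, F.I m ≤ K.I m) ∧
      (∀ f, K.nubar f = F.nubar f) ∧
      (∀ J : RingFiltration R, (∀ f, J.nubar f = F.nubar f) → ∀ m, J.I m ≤ K.I m) := by
  refine ⟨F.saturation, fun m f => Iff.rfl, F.le_saturation, F.nubar_saturation, ?_⟩
  intro J hJ m f hf
  show (m : ℝ≥0∞) ≤ F.nubar f
  rw [← hJ f]
  exact J.le_nubar_of_mem hf
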